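/- Let (H,K) be a match pair of finite groupoids. Define on T = {(k,h) ∈ K × H : s(k) = r(h)} the horizontal partial product (k,h) →□ (k',h') = (kk', h') when h' = k ▷ h (and s(k') = r(h')). On the algebra ℂT with vertical convolution, the map Γ(χ_{(k,h)}) = Σ_{(k₁,h₁) →□ (k₂,h₂) = (k,h)} χ_{(k₁,h₁)} ⊗ χ_{(k₂,h₂)} is coassociative: (Γ ⊗ id) ∘ Γ = (id ⊗ Γ) ∘ Γ. -/

import Mathlib

/-- A (small) groupoid structure on a carrier type `G` of "arrows", with
source map `s`, range map `r`, partial multiplication `mul` (defined when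
`s x = r y`) and inversion `inv`.  Units are identified with the elements
`s x`, `r x`. -/
structure Gpd (G : Type*) where
  s : G → G
  r : G → G
  mul : ∀ x y : G, s x = r y → G
  inv : G → G
  s_mul : ∀ x y h, s (mul x y h) = s y
  r_mul : ∀ x y h, r (mul x y h) = r x
  s_inv : ∀ x, s (inv x) = r x
  r_inv : ∀ x, r (inv x) = s x
  s_s : ∀ x, s (s x) = s x
  r_s : ∀ x, r (s x) = s x
  s_r : ∀ x, s (r x) = r x
  r_r : ∀ x, r (r x) = r x
  mul_source : ∀ x (h : s x = r (s x)), mul x (s x) h = x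
  range_mul : ∀ x (h : s (r x) = r x), mul (r x) x h = x
  mul_inv : ∀ x (h : s x = r (inv x)), mul x (inv x) h = r x
  inv_mul : ∀ x (h : s (inv x) = r x), mul (inv x) x h = s x
  mul_assoc : ∀ x y z (hxy : s x = r y) (hyz : s y = r z)
      (h1 : s (mul x y hxy) = r z) (h2 : s x = r (mul y z hyz)),
      mul (mul x y hxy) z h1 = mul x (mul y z hyz) h2

namespace Gpd

variable {G : Type*} (𝒢 : Gpd G)

/-- The set of units `G⁰` of the groupoid. -/
def units : Set G := {u | 𝒢.r u = u}

/-- A wide subgroupoid: a subset closed under multiplication and inversion and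
containing all units. -/
structure IsSubgpd (H : Set G) : Prop where
  mul_mem : ∀ x y (h : 𝒢.s x = 𝒢.r y), x ∈ H → y ∈ H → 𝒢.mul x y h ∈ H
  inv_mem : ∀ x, x ∈ H → 𝒢.inv x ∈ H
  unit_mem : ∀ u, u ∈ 𝒢.units → u ∈ H

/-- A match pair of subgroupoids `H`, `K` of `G`, together with the projection
maps `p₁ : G → H`, `p₂ : G → K` of the unique factorization `g = p₁ g * p₂ g`. -/
structure MatchPair (H K : Set G) (p₁ p₂ : G → G) : Prop where
  subH : 𝒢.IsSubgpd H
  subK : 𝒢.IsSubgpd K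
  inter : H ∩ K ⊆ 𝒢.units
  p₁_mem : ∀ g, p₁ g ∈ H
  p₂_mem : ∀ g, p₂ g ∈ K
  comp : ∀ g, 𝒢.s (p₁ g) = 𝒢.r (p₂ g)
  decomp : ∀ g, g = 𝒢.mul (p₁ g) (p₂ g) (comp g)
  uniq : ∀ h, h ∈ H → ∀ k, k ∈ K → ∀ hc : 𝒢.s h = 𝒢.r k,
      p₁ (𝒢.mul h k hc) = h ∧ p₂ (𝒢.mul h k hc) = k

theorem MatchPair.s_p₂ {H K : Set G} {p₁ p₂ : G → G}
    (mp : 𝒢.MatchPair H K p₁ p₂) (g : G) : 𝒢.s (p₂ g) = 𝒢.s g := by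
  conv_rhs => rw [mp.decomp g]
  rw [𝒢.s_mul]

theorem MatchPair.r_p₁ {H K : Set G} {p₁ p₂ : G → G}
    (mp : 𝒢.MatchPair H K p₁ p₂) (g : G) : 𝒢.r (p₁ g) = 𝒢.r g := by
  conv_rhs => rw [mp.decomp g]
  rw [𝒢.r_mul]

/-- the left "action" `k ▷ h = p₁ (kh)` -/
def rAct (p₁ : G → G) (k h : G) (hc : 𝒢.s k = 𝒢.r h) : G := p₁ (𝒢.mul k h hc)

/-- the right "action" `k ◁ h = p₂ (kh)` -/
def lAct (p₂ : G → G) (k h : G) (hc : 𝒢.s k = 𝒢.r h) : G := p₂ (𝒢.mul k h hc)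

end Gpd

namespace Gpd

noncomputable section
attribute [local instance] Classical.propDecidable

variable {G : Type*} (𝒢 : Gpd G)

/-- The set `T = {(k,h) ∈ K × H : s k = r h}` indexing the basis of `ℂT`. -/
def Tset (H K : Set G) : Set (G × G) :=
  {p | p.1 ∈ K ∧ p.2 ∈ H ∧ 𝒢.s p.1 = 𝒢.r p.2}

variable [Fintype G] {H K : Set G}

/-- The vertical convolution product on `ℂT`:
`χ_{(k,h)} ⋆ χ_{(k',h')} = χ_{(k,hh')}` if `k' = k ◁ h` (and `h, h'`
composable), and `0` otherwise, extended bilinearly. -/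
def conv (p₂ : G → G) (F F' : ↥(𝒢.Tset H K) → ℂ) : ↥(𝒢.Tset H K) → ℂ :=
  fun t => ∑ t₁ : ↥(𝒢.Tset H K), ∑ t₂ : ↥(𝒢.Tset H K),
    if hd : 𝒢.s t₁.1.2 = 𝒢.r t₂.1.2 then
      (if t₂.1.1 = 𝒢.lAct p₂ t₁.1.1 t₁.1.2 t₁.prop.2.2 ∧
          t.1 = (t₁.1.1, 𝒢.mul t₁.1.2 t₂.1.2 hd) then F t₁ * F' t₂ else 0)
    else 0

end

end Gpd

namespace Gpd

noncomputable section
attribute [local instance] Classical.propDecidable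

variable {G : Type*} (𝒢 : Gpd G) {H K : Set G} {p₁ p₂ : G → G}

/-- The horizontal product `(k₁,h₁) →□ (k₂,h₂) = (k₁k₂, h₂)`, defined when
`k₁, k₂` are composable (and `h₁ = k₂ ▷ h₂`). -/
def hcomp (mp : 𝒢.MatchPair H K p₁ p₂) (t₁ t₂ : ↥(𝒢.Tset H K))
    (hc : 𝒢.s t₁.1.1 = 𝒢.r t₂.1.1) : ↥(𝒢.Tset H K) :=
  ⟨(𝒢.mul t₁.1.1 t₂.1.1 hc, t₂.1.2),
    ⟨mp.subK.mul_mem _ _ hc t₁.prop.1 t₂.prop.1, t₂.prop.2.1, by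
      rw [𝒢.s_mul]; exact t₂.prop.2.2⟩⟩

variable [Fintype G]

/-- The coproduct `Γ(χ_{(k,h)}) = Σ_{(k₁,h₁) →□ (k₂,h₂) = (k,h)}
`χ_{(k₁,h₁)} ⊗ χ_{(k₂,h₂)}`, as a map `(T → ℂ) → (T × T → ℂ)`. -/
def Gam (mp : 𝒢.MatchPair H K p₁ p₂) (F : ↥(𝒢.Tset H K) → ℂ) :
    ↥(𝒢.Tset H K) × ↥(𝒢.Tset H K) → ℂ := fun q =>
  if hc : 𝒢.s q.1.1.1 = 𝒢.r q.2.1.1 then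
    (if q.1.1.2 = 𝒢.rAct p₁ q.2.1.1 q.2.1.2 q.2.prop.2.2 then
      F (𝒢.hcomp mp q.1 q.2 hc) else 0)
  else 0

/-- `Γ ⊗ id` on the (function model of the) tensor square. -/
def GamL (mp : 𝒢.MatchPair H K p₁ p₂) (Ξ : ↥(𝒢.Tset H K) × ↥(𝒢.Tset H K) → ℂ) :
    ↥(𝒢.Tset H K) × ↥(𝒢.Tset H K) × ↥(𝒢.Tset H K) → ℂ := fun q =>
  if hc : 𝒢.s q.1.1.1 = 𝒢.r q.2.1.1.1 then
    (if q.1.1.2 = 𝒢.rAct p₁ q.2.1.1.1 q.2.1.1.2 q.2.1.prop.2.2 then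
      Ξ (𝒢.hcomp mp q.1 q.2.1 hc, q.2.2) else 0)
  else 0

/-- `id ⊗ Γ` on the (function model of the) tensor square. -/
def GamR (mp : 𝒢.MatchPair H K p₁ p₂) (Ξ : ↥(𝒢.Tset H K) × ↥(𝒢.Tset H K) → ℂ) :
    ↥(𝒢.Tset H K) × ↥(𝒢.Tset H K) × ↥(𝒢.Tset H K) → ℂ := fun q =>
  if hc : 𝒢.s q.2.1.1.1 = 𝒢.r q.2.2.1.1 then
    (if q.2.1.1.2 = 𝒢.rAct p₁ q.2.2.1.1 q.2.2.1.2 q.2.2.prop.2.2 then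
      Ξ (q.1, 𝒢.hcomp mp q.2.1 q.2.2 hc) else 0)
  else 0

theorem mul_congr (x x' y y' : G) (hx : x = x') (hy : y = y')
    (h : 𝒢.s x = 𝒢.r y) (h' : 𝒢.s x' = 𝒢.r y') : 𝒢.mul x y h = 𝒢.mul x' y' h' := by
  subst hx; subst hy; rfl

theorem p₁_mul_p₁aux (mp : 𝒢.MatchPair H K p₁ p₂) (k g : G) (hc : 𝒢.s k = 𝒢.r g)
    (hc' : 𝒢.s k = 𝒢.r (p₁ g)) :
    p₁ (𝒢.mul k g hc) = p₁ (𝒢.mul k (p₁ g) hc') := by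
  set g₁ := 𝒢.mul k (p₁ g) hc' with hg₁
  have hs₁ : 𝒢.s g₁ = 𝒢.r (p₂ g) := by rw [hg₁, 𝒢.s_mul]; exact mp.comp g
  have h2 : 𝒢.s (p₂ g₁) = 𝒢.r (p₂ g) := by rw [mp.s_p₂]; exact hs₁
  have h3 : 𝒢.s (p₁ g₁) = 𝒢.r (𝒢.mul (p₂ g₁) (p₂ g) h2) := by
    rw [𝒢.r_mul]; exact mp.comp g₁
  have hK : 𝒢.mul (p₂ g₁) (p₂ g) h2 ∈ K :=
    mp.subK.mul_mem _ _ _ (mp.p₂_mem _) (mp.p₂_mem _)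
  have key : 𝒢.mul k g hc = 𝒢.mul (p₁ g₁) (𝒢.mul (p₂ g₁) (p₂ g) h2) h3 := by
    have hA : 𝒢.s k = 𝒢.r (𝒢.mul (p₁ g) (p₂ g) (mp.comp g)) := by
      rw [𝒢.r_mul]; exact hc'
    have hB : 𝒢.s (𝒢.mul (p₁ g₁) (p₂ g₁) (mp.comp g₁)) = 𝒢.r (p₂ g) := by
      rw [𝒢.s_mul, mp.s_p₂]; exact hs₁
    calc 𝒢.mul k g hc
        = 𝒢.mul k (𝒢.mul (p₁ g) (p₂ g) (mp.comp g)) hA :=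
          𝒢.mul_congr _ _ _ _ rfl (mp.decomp g) _ _
      _ = 𝒢.mul g₁ (p₂ g) hs₁ :=
          (𝒢.mul_assoc k (p₁ g) (p₂ g) hc' (mp.comp g) hs₁ hA).symm
      _ = 𝒢.mul (𝒢.mul (p₁ g₁) (p₂ g₁) (mp.comp g₁)) (p₂ g) hB :=
          𝒢.mul_congr _ _ _ _ (mp.decomp g₁) rfl _ _
      _ = 𝒢.mul (p₁ g₁) (𝒢.mul (p₂ g₁) (p₂ g) h2) h3 :=
          𝒢.mul_assoc (p₁ g₁) (p₂ g₁) (p₂ g) (mp.comp g₁) h2 hB h3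
  rw [key]
  exact (mp.uniq _ (mp.p₁_mem _) _ hK h3).1

theorem rAct_rAct (mp : 𝒢.MatchPair H K p₁ p₂) (k₁ k₂ h : G)
    (h1 : 𝒢.s k₁ = 𝒢.r k₂) (h2 : 𝒢.s k₂ = 𝒢.r h)
    (h3 : 𝒢.s k₁ = 𝒢.r (𝒢.rAct p₁ k₂ h h2)) (h4 : 𝒢.s (𝒢.mul k₁ k₂ h1) = 𝒢.r h) :
    𝒢.rAct p₁ k₁ (𝒢.rAct p₁ k₂ h h2) h3 = 𝒢.rAct p₁ (𝒢.mul k₁ k₂ h1) h h4 := by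
  have hc : 𝒢.s k₁ = 𝒢.r (𝒢.mul k₂ h h2) := by rw [𝒢.r_mul]; exact h1
  unfold rAct
  rw [← p₁_mul_p₁aux 𝒢 mp k₁ (𝒢.mul k₂ h h2) hc h3]
  congr 1
  exact (𝒢.mul_assoc k₁ k₂ h h1 h2 h4 hc).symm

theorem rAct_congr (k k' h h' : G) (hk : k = k') (hh : h = h')
    (hc : 𝒢.s k = 𝒢.r h) (hc' : 𝒢.s k' = 𝒢.r h') :
    𝒢.rAct p₁ k h hc = 𝒢.rAct p₁ k' h' hc' := by
  subst hk; subst hh; rfl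

theorem rAct_assoc (mp : 𝒢.MatchPair H K p₁ p₂) (b c : ↥(𝒢.Tset H K))
    (hbc : 𝒢.s b.1.1 = 𝒢.r c.1.1)
    (h4 : b.1.2 = 𝒢.rAct p₁ c.1.1 c.1.2 c.prop.2.2)
    (h4' : 𝒢.s (𝒢.mul b.1.1 c.1.1 hbc) = 𝒢.r c.1.2) :
    𝒢.rAct p₁ b.1.1 b.1.2 b.prop.2.2 =
      𝒢.rAct p₁ (𝒢.mul b.1.1 c.1.1 hbc) c.1.2 h4' := by
  have hc3 : 𝒢.s b.1.1 = 𝒢.r (𝒢.rAct p₁ c.1.1 c.1.2 c.prop.2.2) := by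
    rw [← h4]; exact b.prop.2.2
  calc 𝒢.rAct p₁ b.1.1 b.1.2 b.prop.2.2
      = 𝒢.rAct p₁ b.1.1 (𝒢.rAct p₁ c.1.1 c.1.2 c.prop.2.2) hc3 :=
        𝒢.rAct_congr _ _ _ _ rfl h4 _ _
    _ = _ := 𝒢.rAct_rAct mp _ _ _ hbc c.prop.2.2 hc3 h4'

/-- the coproduct `Γ` determined by the horizontal product of
the double groupoid `T` is coassociative: `(Γ ⊗ id) ∘ Γ = (id ⊗ Γ) ∘ Γ`. -/
theorem stmt10 (mp : 𝒢.MatchPair H K p₁ p₂) :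
    ∀ F : ↥(𝒢.Tset H K) → ℂ, 𝒢.GamL mp (𝒢.Gam mp F) = 𝒢.GamR mp (𝒢.Gam mp F) := by
  intro F
  funext q
  obtain ⟨a, b, c⟩ := q
  simp only [GamL, GamR, Gam, hcomp, 𝒢.s_mul, 𝒢.r_mul]
  by_cases h1 : 𝒢.s a.1.1 = 𝒢.r b.1.1
  · rw [dif_pos h1]
    by_cases h2 : a.1.2 = 𝒢.rAct p₁ b.1.1 b.1.2 b.prop.2.2
    · rw [if_pos h2]
      by_cases h4 : 𝒢.s b.1.1 = 𝒢.r c.1.1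
      · have h3 : 𝒢.s (𝒢.mul a.1.1 b.1.1 h1) = 𝒢.r c.1.1 := by rw [𝒢.s_mul]; exact h4
        have h6 : 𝒢.s a.1.1 = 𝒢.r (𝒢.mul b.1.1 c.1.1 h4) := by rw [𝒢.r_mul]; exact h1
        erw [dif_pos h3, dif_pos h4]
        by_cases h5 : b.1.2 = 𝒢.rAct p₁ c.1.1 c.1.2 c.prop.2.2
        · erw [if_pos h5, if_pos h5, dif_pos h6,
            if_pos (h2.trans (𝒢.rAct_assoc mp b c h4 h5 _))]
          exact congrArg F (Subtype.ext (Prod.ext (𝒢.mul_assoc _ _ _ _ _ _ _) rfl))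
        · erw [if_neg h5, if_neg h5]
      · have h3 : ¬ 𝒢.s (𝒢.mul a.1.1 b.1.1 h1) = 𝒢.r c.1.1 := by rw [𝒢.s_mul]; exact h4
        erw [dif_neg h3, dif_neg h4]
    · rw [if_neg h2]
      by_cases h4 : 𝒢.s b.1.1 = 𝒢.r c.1.1
      · rw [dif_pos h4]
        by_cases h5 : b.1.2 = 𝒢.rAct p₁ c.1.1 c.1.2 c.prop.2.2
        · have h6 : 𝒢.s a.1.1 = 𝒢.r (𝒢.mul b.1.1 c.1.1 h4) := by rw [𝒢.r_mul]; exact h1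
          erw [if_pos h5, dif_pos h6,
            if_neg (fun h => h2 (h.trans (𝒢.rAct_assoc mp b c h4 h5 _).symm))]
        · rw [if_neg h5]
      · rw [dif_neg h4]
  · rw [dif_neg h1]
    by_cases h4 : 𝒢.s b.1.1 = 𝒢.r c.1.1
    · rw [dif_pos h4]
      by_cases h5 : b.1.2 = 𝒢.rAct p₁ c.1.1 c.1.2 c.prop.2.2
      · have h6 : ¬ 𝒢.s a.1.1 = 𝒢.r (𝒢.mul b.1.1 c.1.1 h4) := by rw [𝒢.r_mul]; exact h1
        erw [if_pos h5, dif_neg h6]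
      · rw [if_neg h5]
    · rw [dif_neg h4]

end

end Gpd
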